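/- Let f : 𝔽_q → 𝔽_q be a map on a finite field 𝔽_q and N ≥ 1. Suppose there exist coefficients α_0, ..., α_{N-1} ∈ 𝔽_q with α_0 ≠ 0 such that f^[N](x) = Σ_{i=0}^{N-1} α_i · f^[i](x) for all x ∈ 𝔽_q. Define g : 𝔽_q → 𝔽_q by g(x) = Σ_{i=0}^{N-1} c_i · f^[i](x), where c_i = −α_{i+1}/α_0 for 0 ≤ i ≤ N−2 and c_{N−1} = α_0^{−1}. Then g ∘ f = id and f ∘ g = id; in particular f is a bijection and g is its inverse. -/

import Mathlib

/-- If `f^[N] = ∑_{i<N} α_i f^[i]` with `α 0 ≠ 0`, then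
`g = ∑_{i<N} c_i f^[i]` with `c_i = -α_{i+1}/α_0` for `i ≤ N-2` and
`c_{N-1} = α_0⁻¹` is a two-sided inverse of `f`. -/
theorem stmt_3 {K : Type*} [Field K] [Fintype K] (f : K → K) (N : ℕ) (hN : 1 ≤ N)
    (α : ℕ → K) (hα : α 0 ≠ 0)
    (hrel : ∀ x : K, f^[N] x = ∑ i ∈ Finset.range N, α i * f^[i] x)
    (c : ℕ → K)
    (hc : ∀ i : ℕ, i + 1 < N → c i = -α (i + 1) / α 0)
    (hcN : c (N - 1) = (α 0)⁻¹)
    (g : K → K)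
    (hg : ∀ x : K, g x = ∑ i ∈ Finset.range N, c i * f^[i] x) :
    g ∘ f = id ∧ f ∘ g = id := by
  obtain ⟨M, rfl⟩ : ∃ M, N = M + 1 := ⟨N - 1, (Nat.succ_pred_eq_of_pos hN).symm⟩
  simp only [Nat.add_sub_cancel] at hcN
  have hgf : ∀ x, g (f x) = x := by
    intro x
    rw [hg]
    have hiter : ∀ i, f^[i] (f x) = f^[i+1] x := fun i => by
      rw [Function.iterate_succ_apply]
    simp only [hiter]
    rw [Finset.sum_range_succ, hcN, hrel x, Finset.sum_range_succ']
    rw [mul_add, Finset.mul_sum]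
    rw [← add_assoc, ← Finset.sum_add_distrib]
    have hz : ∀ i ∈ Finset.range M,
        c i * f^[i+1] x + (α 0)⁻¹ * (α (i+1) * f^[i+1] x) = 0 := by
      intro i hi
      rw [hc i (by simpa using Finset.mem_range.mp hi)]
      field_simp
      ring
    rw [Finset.sum_congr rfl hz, Finset.sum_const, smul_zero, zero_add]
    simp [Function.iterate_zero_apply, inv_mul_cancel_left₀ hα]
  have hinj : Function.Injective f := fun a b h => by
    rw [← hgf a, ← hgf b, h]
  have hsurj : Function.Surjective f := Finite.surjective_of_injective hinj
  refine ⟨funext hgf, funext fun y => ?_⟩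
  obtain ⟨x, rfl⟩ := hsurj y
  simp [Function.comp, hgf x]
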